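/- Let M be a D×D unimodular matrix and let Γ₁, …, Γ_L be D×D nonsingular integer matrices that are pairwise commutative and pairwise coprime. Then for each 1 ≤ i ≤ L, the matrices W_i = MΓ₁⋯Γ_{i−1}Γ_{i+1}⋯Γ_L and M_i = MΓ_i are left coprime, i.e., every common left divisor of W_i and M_i is unimodular. -/

import Mathlib

open Matrix

/-- An integer matrix is unimodular if its determinant is `1` or `-1`. -/
def Unimod {D : ℕ} (U : Matrix (Fin D) (Fin D) ℤ) : Prop := U.det = 1 ∨ U.det = -1

/-- `C` is a common right multiple (crm) of the family `M`. -/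
def IsCRM {D n : ℕ} (M : Fin n → Matrix (Fin D) (Fin D) ℤ)
    (C : Matrix (Fin D) (Fin D) ℤ) : Prop :=
  C.det ≠ 0 ∧ ∀ i, ∃ Q : Matrix (Fin D) (Fin D) ℤ, C = M i * Q

/-- `C` is a least common right multiple (lcrm) of the family `M`. -/
def IsLCRM {D n : ℕ} (M : Fin n → Matrix (Fin D) (Fin D) ℤ)
    (C : Matrix (Fin D) (Fin D) ℤ) : Prop :=
  IsCRM M C ∧ ∀ C', IsCRM M C' → ∃ P : Matrix (Fin D) (Fin D) ℤ, C' = C * P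

/-- `C` is a common left multiple (clm) of the family `M`. -/
def IsCLM {D n : ℕ} (M : Fin n → Matrix (Fin D) (Fin D) ℤ)
    (C : Matrix (Fin D) (Fin D) ℤ) : Prop :=
  C.det ≠ 0 ∧ ∀ i, ∃ Q : Matrix (Fin D) (Fin D) ℤ, C = Q * M i

/-- `C` is a least common left multiple (lclm) of the family `M`. -/
def IsLCLM {D n : ℕ} (M : Fin n → Matrix (Fin D) (Fin D) ℤ)
    (C : Matrix (Fin D) (Fin D) ℤ) : Prop :=
  IsCLM M C ∧ ∀ C', IsCLM M C' → ∃ P : Matrix (Fin D) (Fin D) ℤ, C' = P * C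

/-- `B` is a common left divisor (cld) of the family `M`. -/
def IsCLD {D n : ℕ} (M : Fin n → Matrix (Fin D) (Fin D) ℤ)
    (B : Matrix (Fin D) (Fin D) ℤ) : Prop :=
  B.det ≠ 0 ∧ ∀ i, ∃ K : Matrix (Fin D) (Fin D) ℤ, M i = B * K

/-- `B` is a greatest common left divisor (gcld) of the family `M`:
`B` is a cld, and every cld of the family is a left divisor of `B`. -/
def IsGCLD {D n : ℕ} (M : Fin n → Matrix (Fin D) (Fin D) ℤ)
    (B : Matrix (Fin D) (Fin D) ℤ) : Prop :=
  IsCLD M B ∧ ∀ B', IsCLD M B' → ∃ K : Matrix (Fin D) (Fin D) ℤ, B = B' * K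

/-- `A` and `B` are left coprime: every (nonsingular) common left divisor is unimodular. -/
def LeftCoprime {D : ℕ} (A B : Matrix (Fin D) (Fin D) ℤ) : Prop :=
  ∀ C : Matrix (Fin D) (Fin D) ℤ, C.det ≠ 0 →
    (∃ K, A = C * K) → (∃ K, B = C * K) → Unimod C

/-- `A` and `B` are right coprime: every (nonsingular) common right divisor is unimodular. -/
def RightCoprime {D : ℕ} (A B : Matrix (Fin D) (Fin D) ℤ) : Prop :=
  ∀ C : Matrix (Fin D) (Fin D) ℤ, C.det ≠ 0 →
    (∃ K, A = K * C) → (∃ K, B = K * C) → Unimod C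

/-- `A` and `B` are coprime (for commuting matrices left and right coprimeness coincide). -/
def MatCoprime {D : ℕ} (A B : Matrix (Fin D) (Fin D) ℤ) : Prop :=
  LeftCoprime A B ∧ RightCoprime A B

/-- The lattice generated by an integer matrix `M`: all integer combinations `M n`. -/
def LAT {D : ℕ} (M : Matrix (Fin D) (Fin D) ℤ) : Set (Fin D → ℤ) :=
  {v | ∃ n : Fin D → ℤ, v = M.mulVec n}

/-- `𝒩(M)`: the integer vectors of the form `M x` with `x ∈ [0,1)^D`. -/
def NSet {D : ℕ} (M : Matrix (Fin D) (Fin D) ℤ) : Set (Fin D → ℤ) :=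
  {k | ∃ x : Fin D → ℚ, (∀ j, 0 ≤ x j ∧ x j < 1) ∧
      (M.map (Int.cast : ℤ → ℚ)).mulVec x = fun j => (k j : ℚ)}

/-- `r` is the remainder of `m` modulo `M`: `r ∈ 𝒩(M)` and `m − r ∈ LAT(M)`. -/
def IsRem {D : ℕ} (M : Matrix (Fin D) (Fin D) ℤ) (m r : Fin D → ℤ) : Prop :=
  r ∈ NSet M ∧ (m - r) ∈ LAT M

/-- The Euclidean norm on `ℝ^D`. -/
noncomputable def euclNorm {D : ℕ} (v : Fin D → ℝ) : ℝ := Real.sqrt (∑ j, (v j) ^ 2)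

/-- The lattice generated by a real matrix `M`: all integer combinations `M n`. -/
def LATR {D : ℕ} (M : Matrix (Fin D) (Fin D) ℝ) : Set (Fin D → ℝ) :=
  {v | ∃ n : Fin D → ℤ, v = M.mulVec (fun j => (n j : ℝ))}


namespace Stmt19Aux

variable {D : ℕ}

def colSpan (A : Matrix (Fin D) (Fin D) ℤ) : Submodule ℤ (Fin D → ℤ) :=
  LinearMap.range A.mulVecLin

lemma colSpan_le_of_dvd {A C K : Matrix (Fin D) (Fin D) ℤ} (h : A = C * K) :
    colSpan A ≤ colSpan C := by
  rintro v ⟨n, rfl⟩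
  exact ⟨K.mulVec n, by simp [h, Matrix.mulVecLin_mul]⟩

lemma dvd_of_colSpan_le {A C : Matrix (Fin D) (Fin D) ℤ} (h : colSpan A ≤ colSpan C) :
    ∃ K, A = C * K := by
  have hc : ∀ j : Fin D, ∃ k : Fin D → ℤ, C.mulVec k = fun r => A r j := by
    intro j
    exact h ⟨Pi.single j 1, by ext r; simp [Matrix.mulVec_single]⟩
  choose k hk using hc
  refine ⟨Matrix.of fun r c => k c r, ?_⟩
  ext r j
  have := congrFun (hk j) r
  simpa [Matrix.mulVec, Matrix.mul_apply, dotProduct] using this.symm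

lemma colSpan_mul_eq (A B : Matrix (Fin D) (Fin D) ℤ) :
    colSpan (A * B) = (colSpan B).map A.mulVecLin := by
  rw [colSpan, Matrix.mulVecLin_mul, LinearMap.range_comp]; rfl

lemma unimod_of_colSpan_top {C : Matrix (Fin D) (Fin D) ℤ} (h : colSpan C = ⊤) :
    C.det = 1 ∨ C.det = -1 := by
  obtain ⟨K, hK⟩ := dvd_of_colSpan_le (A := (1 : Matrix (Fin D) (Fin D) ℤ)) (h ▸ le_top)
  have : C.det * K.det = 1 := by rw [← Matrix.det_mul, ← hK, Matrix.det_one]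
  exact Int.isUnit_iff.mp (IsUnit.of_mul_eq_one _ this)

lemma colSpan_top_of_unimod {C : Matrix (Fin D) (Fin D) ℤ} (h : C.det = 1 ∨ C.det = -1) :
    colSpan C = ⊤ := by
  have hu : IsUnit C.det := Int.isUnit_iff.mpr h
  have hc : IsUnit C := (Matrix.isUnit_iff_isUnit_det C).mpr hu
  obtain ⟨u, rfl⟩ := hc
  rw [eq_top_iff]
  rintro v -
  exact ⟨(↑u⁻¹ : Matrix (Fin D) (Fin D) ℤ).mulVec v, by
    simp [Matrix.mulVecLin_apply, Matrix.mulVec_mulVec, u.mul_inv]⟩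

lemma span_top_of_coprime {A B : Matrix (Fin D) (Fin D) ℤ}
    (hA : A.det ≠ 0)
    (h : ∀ C : Matrix (Fin D) (Fin D) ℤ, C.det ≠ 0 →
      (∃ K, A = C * K) → (∃ K, B = C * K) → (C.det = 1 ∨ C.det = -1)) :
    colSpan A ⊔ colSpan B = ⊤ := by
  set N := colSpan A ⊔ colSpan B with hN
  obtain ⟨n, b⟩ := Submodule.basisOfPid (Pi.basisFun ℤ (Fin D)) N
  have hb : LinearIndependent ℤ (fun k : Fin n => (b k : Fin D → ℤ)) :=
    b.linearIndependent.map' N.subtype (Submodule.ker_subtype N)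
  have hnD : n ≤ D := by
    have := hb.fintype_card_le_finrank
    simpa [Module.finrank_pi] using this
  set g : Fin D → (Fin D → ℤ) := fun c =>
    if hc : c.val < n then (b ⟨c.val, hc⟩ : Fin D → ℤ) else 0 with hg
  set C : Matrix (Fin D) (Fin D) ℤ := Matrix.of fun r c => g c r with hC
  have hmv : ∀ x : Fin D → ℤ, C.mulVec x = ∑ c : Fin D, x c • g c := by
    intro x
    ext r
    simp [Matrix.mulVec, dotProduct, hC, mul_comm, Finset.sum_apply]
  have hle : colSpan C ≤ N := by
    rintro v ⟨x, rfl⟩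
    show C.mulVec x ∈ N
    rw [hmv]
    refine Submodule.sum_mem _ fun c _ => Submodule.smul_mem _ _ ?_
    by_cases hc : c.val < n
    · simp only [hg, dif_pos hc]; exact (b ⟨c.val, hc⟩).2
    · simp only [hg, dif_neg hc]; exact N.zero_mem
  have hge : N ≤ colSpan C := by
    intro v hv
    set w : N := ⟨v, hv⟩ with hw
    set x : Fin D → ℤ := fun c =>
      if hc : c.val < n then b.repr w ⟨c.val, hc⟩ else 0 with hx
    refine ⟨x, ?_⟩
    show C.mulVec x = v
    rw [hmv]
    have hv' : v = ∑ k : Fin n, b.repr w k • (b k : Fin D → ℤ) := by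
      have h1 := congrArg (Subtype.val) (b.sum_repr w)
      calc v = (w : Fin D → ℤ) := rfl
        _ = _ := by rw [← h1]; push_cast; rfl
    rw [hv']
    have h2 : ∑ k : Fin n, b.repr w k • (b k : Fin D → ℤ)
        = ∑ c ∈ Finset.univ.map (Fin.castLEEmb hnD), x c • g c := by
      rw [Finset.sum_map]
      refine Finset.sum_congr rfl fun k _ => ?_
      have hk : ((Fin.castLEEmb hnD) k).val < n := by simp [Fin.castLEEmb]
      simp [hx, hg, dif_pos hk, Fin.castLEEmb]
    rw [h2]
    refine (Finset.sum_subset (Finset.subset_univ _) ?_).symm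
    intro c _ hc
    have : ¬ c.val < n := by
      intro hlt
      exact hc (Finset.mem_map.mpr ⟨⟨c.val, hlt⟩, Finset.mem_univ _, by simp [Fin.castLEEmb]⟩)
    simp [hx, dif_neg this]
  have hNC : N = colSpan C := le_antisymm hge hle
  have hAle : colSpan A ≤ colSpan C := hNC ▸ (le_sup_left : colSpan A ≤ N)
  have hBle : colSpan B ≤ colSpan C := hNC ▸ (le_sup_right : colSpan B ≤ N)
  obtain ⟨KA, hKA⟩ := dvd_of_colSpan_le hAle
  obtain ⟨KB, hKB⟩ := dvd_of_colSpan_le hBle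
  have hCdet : C.det ≠ 0 := by
    intro h0
    apply hA
    rw [hKA, Matrix.det_mul, h0, zero_mul]
  have := h C hCdet ⟨KA, hKA⟩ ⟨KB, hKB⟩
  rw [hNC]
  exact colSpan_top_of_unimod this

lemma span_top_list (A : Matrix (Fin D) (Fin D) ℤ) (l : List (Matrix (Fin D) (Fin D) ℤ))
    (hl : ∀ X ∈ l, A * X = X * A ∧ colSpan A ⊔ colSpan X = ⊤) :
    colSpan A ⊔ colSpan l.prod = ⊤ := by
  induction l with
  | nil =>
    have h1 : colSpan ((1 : Matrix (Fin D) (Fin D) ℤ)) = ⊤ :=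
      colSpan_top_of_unimod (Or.inl Matrix.det_one)
    simp [List.prod_nil, h1]
  | cons B t ih =>
    obtain ⟨hcm, htop⟩ := hl B List.mem_cons_self
    have ihs := ih (fun X hX => hl X (List.mem_cons_of_mem _ hX))
    have key : colSpan B ≤ colSpan A ⊔ colSpan (B * t.prod) := by
      calc colSpan B = Submodule.map B.mulVecLin ⊤ := by
            rw [Submodule.map_top]; rfl
        _ = Submodule.map B.mulVecLin (colSpan A ⊔ colSpan t.prod) := by rw [ihs]
        _ = colSpan (B * A) ⊔ colSpan (B * t.prod) := by
            rw [Submodule.map_sup, colSpan_mul_eq, colSpan_mul_eq]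
        _ = colSpan (A * B) ⊔ colSpan (B * t.prod) := by rw [hcm]
        _ ≤ colSpan A ⊔ colSpan (B * t.prod) :=
            sup_le_sup_right (colSpan_le_of_dvd rfl) _
    rw [List.prod_cons, eq_top_iff]
    calc (⊤ : Submodule ℤ (Fin D → ℤ)) = colSpan A ⊔ colSpan B := htop.symm
      _ ≤ colSpan A ⊔ (colSpan A ⊔ colSpan (B * t.prod)) := sup_le_sup_left key _
      _ = colSpan A ⊔ colSpan (B * t.prod) := by rw [← sup_assoc, sup_idem]

end Stmt19Aux

/-- with `M` unimodular and `Γ₁,…,Γ_L` pairwise commutative and coprime,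
`Wᵢ = MΓ₁⋯Γ_{i−1}Γ_{i+1}⋯Γ_L` and `Mᵢ = MΓᵢ` are left coprime. -/
theorem stmt19 {D L : ℕ} (M : Matrix (Fin D) (Fin D) ℤ) (hM : Unimod M)
    (Γ : Fin L → Matrix (Fin D) (Fin D) ℤ) (hΓ : ∀ i, (Γ i).det ≠ 0)
    (hcomm : ∀ i j, Γ i * Γ j = Γ j * Γ i)
    (hcop : ∀ i j, i ≠ j → MatCoprime (Γ i) (Γ j))
    (i : Fin L) :
    LeftCoprime (M * ((List.ofFn Γ).eraseIdx i.val).prod) (M * Γ i) := by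
  classical
  open Stmt19Aux in
  intro C hC hK1 hK2
  obtain ⟨K, hK⟩ := hK1
  obtain ⟨K', hK'⟩ := hK2
  set P : Matrix (Fin D) (Fin D) ℤ := ((List.ofFn Γ).eraseIdx i.val).prod with hP
  -- span condition from coprimality hypotheses
  have hspan : colSpan (Γ i) ⊔ colSpan P = ⊤ := by
    apply span_top_list
    intro X hX
    obtain ⟨k, hk, hXk⟩ := List.mem_iff_getElem.mp hX
    rw [List.getElem_eraseIdx] at hXk
    have hlen : ((List.ofFn Γ).eraseIdx i.val).length = L - 1 := by
      simp [List.length_eraseIdx, i.isLt]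
    by_cases hki : k < i.val
    · rw [dif_pos hki] at hXk
      rw [List.getElem_ofFn] at hXk
      set j : Fin L := ⟨k, by omega⟩ with hj
      have hij : i ≠ j := by
        intro h
        apply Nat.lt_irrefl k
        calc k < i.val := hki
          _ = k := by rw [h]
      refine hXk ▸ ⟨hcomm i j, ?_⟩
      apply span_top_of_coprime (hΓ i)
      intro C0 hC0 h1 h2
      exact (hcop i j hij).1 C0 hC0 h1 h2
    · rw [dif_neg hki] at hXk
      have hkL : k + 1 < L := by
        have := hk
        rw [hlen] at this
        omega
      rw [List.getElem_ofFn] at hXk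
      set j : Fin L := ⟨k + 1, by omega⟩ with hj
      have hij : i ≠ j := by
        intro h
        have : i.val = k + 1 := by rw [h]
        omega
      refine hXk ▸ ⟨hcomm i j, ?_⟩
      apply span_top_of_coprime (hΓ i)
      intro C0 hC0 h1 h2
      exact (hcop i j hij).1 C0 hC0 h1 h2
  -- invert M
  have hMu : IsUnit M := (Matrix.isUnit_iff_isUnit_det M).mpr (Int.isUnit_iff.mpr hM)
  obtain ⟨u, hu⟩ := hMu
  set C' : Matrix (Fin D) (Fin D) ℤ := (↑u⁻¹ : Matrix (Fin D) (Fin D) ℤ) * C with hC'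
  have hPdvd : P = C' * K := by
    have : (↑u⁻¹ : Matrix (Fin D) (Fin D) ℤ) * (M * P) = P := by
      rw [← hu, ← mul_assoc, u.inv_mul, one_mul]
    rw [← this, hK, hC', mul_assoc]
  have hGdvd : Γ i = C' * K' := by
    have : (↑u⁻¹ : Matrix (Fin D) (Fin D) ℤ) * (M * Γ i) = Γ i := by
      rw [← hu, ← mul_assoc, u.inv_mul, one_mul]
    rw [← this, hK', hC', mul_assoc]
  have hCtop : colSpan C' = ⊤ := by
    rw [eq_top_iff, ← hspan]
    exact sup_le (colSpan_le_of_dvd hGdvd) (colSpan_le_of_dvd hPdvd)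
  have hC'uni : C'.det = 1 ∨ C'.det = -1 := unimod_of_colSpan_top hCtop
  have hCeq : C = M * C' := by
    rw [hC', ← mul_assoc, ← hu, u.mul_inv, one_mul]
  have hdet : C.det = M.det * C'.det := by rw [hCeq, Matrix.det_mul]
  rcases hM with h1 | h1 <;> rcases hC'uni with h2 | h2 <;>
    [left; right; right; left] <;> rw [hdet, h1, h2] <;> ring
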